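/- arXiv:2508.07070 — 2 statements merged into one kernel-verified Lean document; each statement's English description precedes it below -/
import Mathlib

section
/- Let α < β ≤ γ < δ with β - α = δ - γ = r > 0. Let ξ^1_κ = α + κ(β-α)/(K+1) and ξ^2_κ = γ + κ(δ-γ)/(K+1) for κ = 1,…,K, and let μ > 0. Then for every x with ξ^1_k < x < ξ^1_{k+1} (1 ≤ k ≤ K-1), the weight W_{μ,2}(x) = (∏_κ|x-ξ^2_κ|^{-μ})/(∏_κ|x-ξ^1_κ|^{-μ} + ∏_κ|x-ξ^2_κ|^{-μ}) satisfies W_{μ,2}(x) ≤ ( k!(K-k)! / ( ∏_{κ=1}^K (K-k+κ) + (K+1)^K ((γ-β)/r)^K ) )^μ. -/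
open Nat

lemma aux_refl_fact (n : ℕ) : ∏ κ ∈ Finset.Icc 1 n, (n + 1 - κ) = n ! := by
  have h1 : ∏ κ ∈ Finset.Icc 1 n, (n + 1 - κ) = ∏ κ ∈ Finset.Icc 1 n, κ := by
    refine Finset.prod_nbij' (fun κ => n + 1 - κ) (fun κ => n + 1 - κ) ?_ ?_ ?_ ?_ ?_ <;>
      intro a ha <;> simp only [Finset.mem_Icc] at * <;> omega
  rw [h1, ← Finset.Ico_add_one_right_eq_Icc, Finset.prod_Ico_id_eq_factorial]

lemma aux_shift_fact (k K : ℕ) (hk : k ≤ K) :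
    ∏ κ ∈ Finset.Icc (k + 1) K, (κ - k) = (K - k)! := by
  have h1 : ∏ κ ∈ Finset.Icc (k + 1) K, (κ - k) = ∏ κ ∈ Finset.Icc 1 (K - k), κ := by
    refine Finset.prod_nbij' (fun κ => κ - k) (fun κ => κ + k) ?_ ?_ ?_ ?_ ?_ <;>
      intro a ha <;> simp only [Finset.mem_Icc] at * <;> omega
  rw [h1, ← Finset.Ico_add_one_right_eq_Icc, Finset.prod_Ico_id_eq_factorial]

set_option maxHeartbeats 1000000 in
theorem stmt_6 (K : ℕ) (hK : 2 ≤ K) (α β γ δ r μ : ℝ)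
    (hαβ : α < β) (hβγ : β ≤ γ) (hγδ : γ < δ) (hr : 0 < r)
    (hr1 : β - α = r) (hr2 : δ - γ = r) (hμ : 0 < μ)
    (ξ1 ξ2 : ℕ → ℝ)
    (hξ1 : ∀ κ, ξ1 κ = α + (κ : ℝ) * (β - α) / (K + 1))
    (hξ2 : ∀ κ, ξ2 κ = γ + (κ : ℝ) * (δ - γ) / (K + 1))
    (k : ℕ) (hk1 : 1 ≤ k) (hk2 : k ≤ K - 1)
    (x : ℝ) (hx : x ∈ Set.Ioo (ξ1 k) (ξ1 (k + 1))) :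
    (∏ κ ∈ Finset.Icc 1 K, |x - ξ2 κ| ^ (-μ)) /
        ((∏ κ ∈ Finset.Icc 1 K, |x - ξ1 κ| ^ (-μ)) +
          ∏ κ ∈ Finset.Icc 1 K, |x - ξ2 κ| ^ (-μ)) ≤
      (((k ! * (K - k)! : ℕ) : ℝ) /
          ((∏ κ ∈ Finset.Icc 1 K, ((K : ℝ) - k + κ)) +
            ((K : ℝ) + 1) ^ K * ((γ - β) / r) ^ K)) ^ μ := by
  have hK1 : (0:ℝ) < (K:ℝ) + 1 := by positivity
  obtain ⟨h, hh_def⟩ : ∃ h : ℝ, h = r / ((K:ℝ) + 1) := ⟨_, rfl⟩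
  have hh : 0 < h := by rw [hh_def]; positivity
  have hrh : ((K:ℝ) + 1) * h = r := by rw [hh_def]; exact mul_div_cancel₀ r hK1.ne'
  have hkK : k + 1 ≤ K := by omega
  have hkR : (k:ℝ) + 1 ≤ (K:ℝ) := by exact_mod_cast hkK
  have hβh : β = α + ((K:ℝ) + 1) * h := by rw [hrh]; linarith
  have hx1' : ∀ κ : ℕ, ξ1 κ = α + (κ:ℝ) * h := by
    intro κ; rw [hξ1, hr1, mul_div_assoc, ← hh_def]
  have hx2' : ∀ κ : ℕ, ξ2 κ = γ + (κ:ℝ) * h := by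
    intro κ; rw [hξ2, hr2, mul_div_assoc, ← hh_def]
  obtain ⟨hxl, hxr⟩ := hx
  rw [hx1'] at hxl
  rw [hx1'] at hxr
  push_cast at hxr
  set m : ℕ → ℕ := fun κ => if κ ≤ k then k + 1 - κ else κ - k with hm_def
  set A : ℝ := ∏ κ ∈ Finset.Icc 1 K, |x - ξ1 κ| with hA_def
  set B : ℝ := ∏ κ ∈ Finset.Icc 1 K, |x - ξ2 κ| with hB_def
  set P : ℝ := ∏ κ ∈ Finset.Icc 1 K, ((K : ℝ) - k + κ) with hP_def
  set Q : ℝ := ((K : ℝ) + 1) ^ K * ((γ - β) / r) ^ K with hQ_def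
  set N : ℝ := ((k ! * (K - k)! : ℕ) : ℝ) with hN_def
  -- per-factor bounds for the first node set
  have hm : ∀ κ ∈ Finset.Icc 1 K, 0 < |x - ξ1 κ| ∧ |x - ξ1 κ| ≤ h * (m κ : ℝ) := by
    intro κ hκ
    rw [Finset.mem_Icc] at hκ
    rw [hx1']
    by_cases hc : κ ≤ k
    · have hcR : (κ:ℝ) ≤ (k:ℝ) := by exact_mod_cast hc
      have hmv : (m κ : ℝ) = (k:ℝ) + 1 - κ := by
        simp only [hm_def, if_pos hc]
        rw [Nat.cast_sub (by omega)]; push_cast; ring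
      have hmul : (κ:ℝ) * h ≤ (k:ℝ) * h := mul_le_mul_of_nonneg_right hcR hh.le
      have e : ((k:ℝ) + 1 - κ) * h = (k:ℝ) * h + h - (κ:ℝ) * h := by ring
      have e2 : ((k:ℝ) + 1) * h = (k:ℝ) * h + h := by ring
      have hgt : 0 < x - (α + (κ:ℝ) * h) := by linarith
      have hlt : x - (α + (κ:ℝ) * h) ≤ ((k:ℝ) + 1 - κ) * h := by linarith
      rw [abs_of_pos hgt, hmv]
      exact ⟨hgt, by linarith [hlt]⟩
    · have hcR : (k:ℝ) + 1 ≤ (κ:ℝ) := by exact_mod_cast (by omega : k + 1 ≤ κ)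
      have hmv : (m κ : ℝ) = (κ:ℝ) - k := by
        simp only [hm_def, if_neg hc]
        rw [Nat.cast_sub (by omega)]
      have hmul : ((k:ℝ) + 1) * h ≤ (κ:ℝ) * h := mul_le_mul_of_nonneg_right hcR hh.le
      have e : ((κ:ℝ) - k) * h = (κ:ℝ) * h - (k:ℝ) * h := by ring
      have e2 : ((k:ℝ) + 1) * h = (k:ℝ) * h + h := by ring
      have hgt : 0 < (α + (κ:ℝ) * h) - x := by linarith
      have hlt : (α + (κ:ℝ) * h) - x ≤ ((κ:ℝ) - k) * h := by linarith
      rw [abs_sub_comm, abs_of_pos hgt, hmv]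
      exact ⟨hgt, by linarith [hlt]⟩
  have hA_pos : 0 < A := Finset.prod_pos fun κ hκ => (hm κ hκ).1
  have hcard : (Finset.Icc 1 K).card = K := by rw [Nat.card_Icc]; omega
  have hmprod : ∏ κ ∈ Finset.Icc 1 K, m κ = k ! * (K - k)! := by
    have e1 : Finset.Icc 1 K = Finset.Ioc 0 K := by ext a; simp [Nat.lt_iff_add_one_le]
    have e2 : Finset.Ioc 0 k = Finset.Icc 1 k := by ext a; simp [Nat.lt_iff_add_one_le]
    have e3 : Finset.Ioc k K = Finset.Icc (k + 1) K := by
      ext a; simp only [Finset.mem_Ioc, Finset.mem_Icc]; omega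
    rw [e1, ← Finset.prod_Ioc_consecutive m (Nat.zero_le k) (by omega : k ≤ K), e2, e3]
    have p1 : ∏ κ ∈ Finset.Icc 1 k, m κ = k ! := by
      rw [Finset.prod_congr rfl fun a ha => ?_, aux_refl_fact k]
      rw [Finset.mem_Icc] at ha
      simp only [hm_def, if_pos ha.2]
    have p2 : ∏ κ ∈ Finset.Icc (k + 1) K, m κ = (K - k)! := by
      rw [Finset.prod_congr rfl fun a ha => ?_, aux_shift_fact k K (by omega)]
      rw [Finset.mem_Icc] at ha
      simp only [hm_def, if_neg (by omega : ¬ a ≤ k)]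
    rw [p1, p2]
  have hA_le : A ≤ h ^ K * N := by
    calc A ≤ ∏ κ ∈ Finset.Icc 1 K, (h * (m κ : ℝ)) :=
          Finset.prod_le_prod (fun κ _ => abs_nonneg _) fun κ hκ => (hm κ hκ).2
    _ = h ^ K * ∏ κ ∈ Finset.Icc 1 K, (m κ : ℝ) := by
          rw [Finset.prod_mul_distrib, Finset.prod_const, hcard]
    _ = h ^ K * N := by rw [← Nat.cast_prod, hmprod, hN_def]
  -- per-factor bounds for the second node set
  have hBf : ∀ κ ∈ Finset.Icc 1 K,
      (γ - β) + ((K:ℝ) - k + κ) * h ≤ |x - ξ2 κ| ∧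
      0 < (γ - β) + ((K:ℝ) - k + κ) * h := by
    intro κ hκ
    rw [Finset.mem_Icc] at hκ
    have hκR : (1:ℝ) ≤ (κ:ℝ) := by exact_mod_cast hκ.1
    rw [hx2']
    have e : ((K:ℝ) - k + κ) * h = (K:ℝ) * h - (k:ℝ) * h + (κ:ℝ) * h := by ring
    have e2 : ((K:ℝ) + 1) * h = (K:ℝ) * h + h := by ring
    have e3 : ((k:ℝ) + 1) * h = (k:ℝ) * h + h := by ring
    have hmul2 : (2:ℝ) * h ≤ ((K:ℝ) - k + κ) * h :=
      mul_le_mul_of_nonneg_right (by linarith) hh.le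
    have key : (γ - β) + ((K:ℝ) - k + κ) * h ≤ (γ + (κ:ℝ) * h) - x := by linarith
    have hpos : 0 < (γ - β) + ((K:ℝ) - k + κ) * h := by linarith
    rw [abs_sub_comm, abs_of_pos (lt_of_lt_of_le hpos key)]
    exact ⟨key, hpos⟩
  have hP_pos : 0 < P :=
    Finset.prod_pos fun κ hκ => by
      rw [Finset.mem_Icc] at hκ
      have : (1:ℝ) ≤ (κ:ℝ) := by exact_mod_cast hκ.1
      linarith
  have hQ_nonneg : 0 ≤ Q :=
    mul_nonneg (by positivity) (pow_nonneg (div_nonneg (by linarith) hr.le) K)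
  have hB_ge : h ^ K * (P + Q) ≤ B := by
    have step1 : ∏ κ ∈ Finset.Icc 1 K, ((γ - β) + ((K:ℝ) - k + κ) * h) ≤ B :=
      Finset.prod_le_prod (fun κ hκ => (hBf κ hκ).2.le) fun κ hκ => (hBf κ hκ).1
    have hone : (1 : ℕ) ∈ Finset.Icc 1 K := by rw [Finset.mem_Icc]; omega
    have hterm : ∀ κ ∈ Finset.Icc 1 K, 0 ≤ ((K:ℝ) - k + κ) * h := by
      intro κ hκ
      rw [Finset.mem_Icc] at hκ
      have : (1:ℝ) ≤ (κ:ℝ) := by exact_mod_cast hκ.1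
      exact mul_nonneg (by linarith) hh.le
    have step2 : ((∏ _κ ∈ Finset.Icc 1 K, (γ - β)) +
        ∏ κ ∈ Finset.Icc 1 K, (((K:ℝ) - k + κ) * h)) ≤
        ∏ κ ∈ Finset.Icc 1 K, ((γ - β) + ((K:ℝ) - k + κ) * h) := by
      refine Finset.prod_add_prod_le hone le_rfl ?_ ?_ ?_ ?_
      · intro j hj _; linarith [hterm j hj]
      · intro j hj _; linarith [(by linarith : (0:ℝ) ≤ γ - β)]
      · intro i _; linarith
      · exact hterm
    have e1 : (∏ _κ ∈ Finset.Icc 1 K, (γ - β)) = (γ - β) ^ K := by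
      rw [Finset.prod_const, hcard]
    have e2 : (∏ κ ∈ Finset.Icc 1 K, (((K:ℝ) - k + κ) * h)) = P * h ^ K := by
      rw [Finset.prod_mul_distrib, Finset.prod_const, hcard, hP_def]
    have e3 : h ^ K * (P + Q) = (γ - β) ^ K + P * h ^ K := by
      have : h ^ K * Q = (γ - β) ^ K := by
        have : (((K:ℝ) + 1) * h) ^ K = r ^ K := by rw [hrh]
        calc h ^ K * Q = (((K:ℝ) + 1) * h) ^ K * ((γ - β) / r) ^ K := by
              rw [hQ_def, mul_pow]; ring
        _ = r ^ K * ((γ - β) / r) ^ K := by rw [this]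
        _ = (γ - β) ^ K := by rw [div_pow]; field_simp
      rw [mul_add, this]; ring
    rw [e3]
    calc (γ - β) ^ K + P * h ^ K ≤
        ∏ κ ∈ Finset.Icc 1 K, ((γ - β) + ((K:ℝ) - k + κ) * h) := by
          rw [← e1, ← e2]; exact step2
    _ ≤ B := step1
  have hD_pos : 0 < P + Q := by linarith
  have hB_pos : 0 < B := lt_of_lt_of_le (by positivity) hB_ge
  have hN_pos : 0 < N := by rw [hN_def]; positivity
  -- assemble
  rw [Real.finset_prod_rpow _ _ (fun i _ => abs_nonneg _) (-μ),
    Real.finset_prod_rpow _ _ (fun i _ => abs_nonneg _) (-μ)]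
  have hApow : 0 < A ^ (-μ) := Real.rpow_pos_of_pos hA_pos _
  have hBpow : 0 < B ^ (-μ) := Real.rpow_pos_of_pos hB_pos _
  have step1 : B ^ (-μ) / (A ^ (-μ) + B ^ (-μ)) ≤ B ^ (-μ) / A ^ (-μ) := by
    gcongr
    linarith
  have step2 : B ^ (-μ) / A ^ (-μ) = (A / B) ^ μ := by
    rw [Real.rpow_neg hA_pos.le, Real.rpow_neg hB_pos.le,
      Real.div_rpow hA_pos.le hB_pos.le]
    rw [div_eq_div_iff (by positivity) (by positivity)]
    field_simp
  have step3 : A / B ≤ N / (P + Q) := by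
    calc A / B ≤ (h ^ K * N) / (h ^ K * (P + Q)) :=
          div_le_div₀ (by positivity) hA_le (by positivity) hB_ge
    _ = N / (P + Q) := mul_div_mul_left _ _ (by positivity)
  calc B ^ (-μ) / (A ^ (-μ) + B ^ (-μ)) ≤ (A / B) ^ μ := step2 ▸ step1
  _ ≤ (N / (P + Q)) ^ μ :=
      Real.rpow_le_rpow (div_nonneg hA_pos.le hB_pos.le) step3 hμ.le
end

section
/- With the same setup (α < β ≤ γ < δ, β-α = δ-γ = r, equispaced nodes ξ^1_κ ∈ (α,β) and ξ^2_κ ∈ (γ,δ)), for every x with ξ^2_k < x < ξ^2_{k+1} (1 ≤ k ≤ K-1), W_{μ,1}(x) ≤ ( k!(K-k)! / ( ∏_{κ=1}^K (k+κ) + (K+1)^K ((γ-β)/r)^K ) )^μ. -/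
open Nat

/-- Reflection of a product over `Icc 1 n`. -/
lemma prod_reflect_Icc (n : ℕ) (f : ℕ → ℝ) :
    ∏ κ ∈ Finset.Icc 1 n, f (n + 1 - κ) = ∏ κ ∈ Finset.Icc 1 n, f κ := by
  refine Finset.prod_nbij' (fun κ => n + 1 - κ) (fun κ => n + 1 - κ)
    (fun a ha => ?_) (fun a ha => ?_) (fun a ha => ?_) (fun a ha => ?_) (fun a ha => rfl) <;>
  · simp only [Finset.mem_Icc] at ha ⊢
    omega

lemma prod_Icc_id_fact (n : ℕ) : ∏ κ ∈ Finset.Icc 1 n, (κ : ℝ) = n ! := by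
  rw [show Finset.Icc 1 n = Finset.Ico 1 (n + 1) by rw [Finset.Ico_add_one_right_eq_Icc],
    Finset.prod_Ico_eq_prod_range]
  rw [← Nat.cast_prod]
  norm_cast
  simpa [add_comm] using Finset.prod_range_add_one_eq_factorial n

lemma prod_descend (k : ℕ) : ∏ κ ∈ Finset.Icc 1 k, ((k : ℝ) + 1 - κ) = k ! := by
  have h1 : ∏ κ ∈ Finset.Icc 1 k, ((k : ℝ) + 1 - κ)
      = ∏ κ ∈ Finset.Icc 1 k, ((k + 1 - κ : ℕ) : ℝ) := by
    refine Finset.prod_congr rfl fun κ hκ => ?_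
    simp only [Finset.mem_Icc] at hκ
    have h : (↑(k + 1 - κ) : ℝ) = (k : ℝ) + 1 - κ := by
      have : κ ≤ k + 1 := by omega
      push_cast [this]; ring
    rw [h]
  rw [h1, prod_reflect_Icc k (fun κ => ((κ : ℕ) : ℝ)), prod_Icc_id_fact]

lemma prod_ascend (k K : ℕ) (hk : k ≤ K) :
    ∏ κ ∈ Finset.Icc (k + 1) K, ((κ : ℝ) - k) = (K - k)! := by
  rw [show Finset.Icc (k+1) K = Finset.Ico (k+1) (K + 1) by rw [Finset.Ico_add_one_right_eq_Icc],
    Finset.prod_Ico_eq_prod_range]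
  have hc : K + 1 - (k + 1) = K - k := by omega
  rw [hc]
  have : ∀ i ∈ Finset.range (K - k), ((k + 1 + i : ℕ) : ℝ) - (k : ℝ) = ((i + 1 : ℕ) : ℝ) := by
    intro i _; push_cast; ring
  rw [Finset.prod_congr rfl this, ← Nat.cast_prod, Finset.prod_range_add_one_eq_factorial]

set_option maxHeartbeats 2000000 in
theorem stmt_7 (K : ℕ) (hK : 2 ≤ K) (α β γ δ r μ : ℝ)
    (hαβ : α < β) (hβγ : β ≤ γ) (hγδ : γ < δ) (hr : 0 < r)
    (hr1 : β - α = r) (hr2 : δ - γ = r) (hμ : 0 < μ)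
    (ξ1 ξ2 : ℕ → ℝ)
    (hξ1 : ∀ κ, ξ1 κ = α + (κ : ℝ) * (β - α) / (K + 1))
    (hξ2 : ∀ κ, ξ2 κ = γ + (κ : ℝ) * (δ - γ) / (K + 1))
    (k : ℕ) (hk1 : 1 ≤ k) (hk2 : k ≤ K - 1)
    (x : ℝ) (hx : x ∈ Set.Ioo (ξ2 k) (ξ2 (k + 1))) :
    (∏ κ ∈ Finset.Icc 1 K, |x - ξ1 κ| ^ (-μ)) /
        ((∏ κ ∈ Finset.Icc 1 K, |x - ξ1 κ| ^ (-μ)) +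
          ∏ κ ∈ Finset.Icc 1 K, |x - ξ2 κ| ^ (-μ)) ≤
      (((k ! * (K - k)! : ℕ) : ℝ) /
          ((∏ κ ∈ Finset.Icc 1 K, ((k : ℝ) + κ)) +
            ((K : ℝ) + 1) ^ K * ((γ - β) / r) ^ K)) ^ μ := by
  have hkK : k + 1 ≤ K := by omega
  set h : ℝ := r / ((K : ℝ) + 1) with hh_def
  have hKpos : (0:ℝ) < (K : ℝ) + 1 := by positivity
  have hh : 0 < h := div_pos hr hKpos
  have hrh : ((K : ℝ) + 1) * h = r := by rw [hh_def]; field_simp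
  set c : ℝ := γ - β with hc_def
  have hc : 0 ≤ c := by simp [hc_def]; linarith
  have hξ1' : ∀ κ : ℕ, ξ1 κ = α + (κ : ℝ) * h := by
    intro κ; rw [hξ1, hr1, hh_def]; ring
  have hξ2' : ∀ κ : ℕ, ξ2 κ = γ + (κ : ℝ) * h := by
    intro κ; rw [hξ2, hr2, hh_def]; ring
  obtain ⟨hx1, hx2⟩ := hx
  rw [hξ2'] at hx1 hx2
  push_cast at hx2
  -- hx1 : γ + k * h < x, hx2 : x < γ + (k+1) * h
  have hcard : (Finset.Icc 1 K).card = K := by rw [Nat.card_Icc]; omega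
  -- lower bound on numerator product factors
  set A : ℝ := ∏ κ ∈ Finset.Icc 1 K, |x - ξ1 κ| with hA_def
  set B : ℝ := ∏ κ ∈ Finset.Icc 1 K, |x - ξ2 κ| with hB_def
  set D : ℝ := (∏ κ ∈ Finset.Icc 1 K, ((k : ℝ) + κ)) +
      ((K : ℝ) + 1) ^ K * ((γ - β) / r) ^ K with hD_def
  set N : ℝ := ((k ! * (K - k)! : ℕ) : ℝ) with hN_def
  have hxpos : ∀ κ ∈ Finset.Icc 1 K,
      c + ((k : ℝ) + ((K + 1 - κ : ℕ) : ℝ)) * h ≤ x - ξ1 κ := by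
    intro κ hκ
    simp only [Finset.mem_Icc] at hκ
    have hcast : ((K + 1 - κ : ℕ) : ℝ) = (K : ℝ) + 1 - (κ : ℝ) := by
      have : κ ≤ K + 1 := by omega
      push_cast [this]; ring
    rw [hcast, hξ1']
    have heq : c + ((k : ℝ) + ((K : ℝ) + 1 - κ)) * h
        = (γ + (k : ℝ) * h) - (α + (κ : ℝ) * h) + (((K:ℝ)+1) * h - r) := by
      simp only [hc_def]; linear_combination -hr1
    rw [heq, hrh]
    linarith
  have hfac_pos : ∀ κ ∈ Finset.Icc 1 K,
      (0:ℝ) < c + ((k : ℝ) + ((K + 1 - κ : ℕ) : ℝ)) * h := by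
    intro κ hκ
    simp only [Finset.mem_Icc] at hκ
    have h1 : (1:ℝ) ≤ ((K + 1 - κ : ℕ) : ℝ) := by
      have : 1 ≤ K + 1 - κ := by omega
      exact_mod_cast this
    have hk0 : (0:ℝ) ≤ (k:ℝ) := by positivity
    nlinarith
  have hAlow : D * h ^ K ≤ A := by
    have step1 : ∏ κ ∈ Finset.Icc 1 K, (c + ((k : ℝ) + ((K + 1 - κ : ℕ) : ℝ)) * h) ≤ A := by
      rw [hA_def]
      refine Finset.prod_le_prod (fun κ hκ => le_of_lt (hfac_pos κ hκ)) ?_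
      intro κ hκ
      have := hxpos κ hκ
      have hpos : 0 < x - ξ1 κ := lt_of_lt_of_le (hfac_pos κ hκ) this
      rw [abs_of_pos hpos]; exact this
    have step2 : ∏ κ ∈ Finset.Icc 1 K, (c + ((k : ℝ) + ((K + 1 - κ : ℕ) : ℝ)) * h)
        = ∏ κ ∈ Finset.Icc 1 K, (c + ((k : ℝ) + (κ : ℝ)) * h) :=
      prod_reflect_Icc K (fun κ => c + ((k : ℝ) + (κ : ℝ)) * h)
    have step3 : (∏ κ ∈ Finset.Icc 1 K, ((k : ℝ) + (κ : ℝ)) * h) + ∏ κ ∈ Finset.Icc 1 K, c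
        ≤ ∏ κ ∈ Finset.Icc 1 K, (c + ((k : ℝ) + (κ : ℝ)) * h) := by
      refine Finset.prod_add_prod_le (i := 1) ?_ ?_ ?_ ?_ ?_ ?_
      · simp only [Finset.mem_Icc]; omega
      · rw [add_comm]
      · intro j hj _
        simp only [Finset.mem_Icc] at hj
        have : (0:ℝ) ≤ c := hc
        nlinarith [Nat.cast_nonneg (α := ℝ) j, Nat.cast_nonneg (α := ℝ) k, hh.le]
      · intro j hj _
        simp only [Finset.mem_Icc] at hj
        nlinarith [Nat.cast_nonneg (α := ℝ) j, Nat.cast_nonneg (α := ℝ) k, hh.le]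
      · intro j hj
        have : (0:ℝ) ≤ (k:ℝ) + j := by positivity
        positivity
      · intro j _; exact hc
    have step4 : (∏ κ ∈ Finset.Icc 1 K, ((k : ℝ) + (κ : ℝ)) * h)
        = (∏ κ ∈ Finset.Icc 1 K, ((k : ℝ) + (κ : ℝ))) * h ^ K := by
      rw [Finset.prod_mul_distrib, Finset.prod_const, hcard]
    have hrne : r ≠ 0 := hr.ne'
    have hKne : (K:ℝ) + 1 ≠ 0 := hKpos.ne'
    have hkey : ((K:ℝ) + 1) * ((γ - β)/r) * h = c := by
      rw [hc_def, hh_def]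
      field_simp
    have step5 : (∏ κ ∈ Finset.Icc 1 K, c) = ((K : ℝ) + 1) ^ K * ((γ - β) / r) ^ K * h ^ K := by
      rw [Finset.prod_const, hcard, ← mul_pow, ← mul_pow, hkey]
    rw [hD_def]; rw [add_mul]
    calc (∏ κ ∈ Finset.Icc 1 K, ((k : ℝ) + κ)) * h ^ K
          + ((K : ℝ) + 1) ^ K * ((γ - β) / r) ^ K * h ^ K
        = (∏ κ ∈ Finset.Icc 1 K, ((k : ℝ) + (κ : ℝ)) * h) + ∏ κ ∈ Finset.Icc 1 K, c := by
          rw [step4, step5]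
      _ ≤ ∏ κ ∈ Finset.Icc 1 K, (c + ((k : ℝ) + (κ : ℝ)) * h) := step3
      _ = ∏ κ ∈ Finset.Icc 1 K, (c + ((k : ℝ) + ((K + 1 - κ : ℕ) : ℝ)) * h) := step2.symm
      _ ≤ A := step1
  -- upper bound on B
  have hBup : B ≤ N * h ^ K := by
    have hbound : ∀ κ ∈ Finset.Icc 1 K,
        |x - ξ2 κ| ≤ (if κ ≤ k then ((k:ℝ) + 1 - κ) else ((κ:ℝ) - k)) * h := by
      intro κ hκ
      simp only [Finset.mem_Icc] at hκ
      rw [hξ2']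
      by_cases hcase : κ ≤ k
      · have hκk : (κ:ℝ) ≤ k := by exact_mod_cast hcase
        have hm : (κ:ℝ) * h ≤ (k:ℝ) * h := mul_le_mul_of_nonneg_right hκk hh.le
        have e : ((k:ℝ) + 1 - κ) * h = (γ + ((k:ℝ) + 1) * h) - (γ + (κ:ℝ) * h) := by ring
        rw [if_pos hcase, abs_of_pos (by linarith)]
        linarith [e]
      · have hκk : (k:ℝ) + 1 ≤ (κ:ℝ) := by exact_mod_cast (by omega : k + 1 ≤ κ)
        have hm : ((k:ℝ) + 1) * h ≤ (κ:ℝ) * h := mul_le_mul_of_nonneg_right hκk hh.le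
        have e : ((κ:ℝ) - k) * h = (γ + (κ:ℝ) * h) - (γ + (k:ℝ) * h) := by ring
        have hm2 : (k:ℝ) * h ≤ ((k:ℝ) + 1) * h := by
          have : (k:ℝ) ≤ (k:ℝ) + 1 := by linarith
          exact mul_le_mul_of_nonneg_right this hh.le
        rw [if_neg hcase, abs_of_neg (by linarith)]
        linarith [e]
    have hb : B ≤ ∏ κ ∈ Finset.Icc 1 K,
        (if κ ≤ k then ((k:ℝ) + 1 - κ) else ((κ:ℝ) - k)) * h := by
      rw [hB_def]
      exact Finset.prod_le_prod (fun κ _ => abs_nonneg _) hbound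
    have hsplit : ∏ κ ∈ Finset.Icc 1 K,
        (if κ ≤ k then ((k:ℝ) + 1 - κ) else ((κ:ℝ) - k)) * h = N * h ^ K := by
      rw [Finset.prod_mul_distrib, Finset.prod_const, hcard, hN_def]
      congr 1
      have hunion : Finset.Icc 1 K = Finset.Icc 1 k ∪ Finset.Icc (k+1) K := by
        ext a; simp only [Finset.mem_union, Finset.mem_Icc]; omega
      have hdisj : Disjoint (Finset.Icc 1 k) (Finset.Icc (k+1) K) := by
        simp only [Finset.disjoint_left, Finset.mem_Icc]
        intro a ha; omega
      rw [hunion, Finset.prod_union hdisj]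
      have e1 : ∏ κ ∈ Finset.Icc 1 k, (if κ ≤ k then ((k:ℝ) + 1 - κ) else ((κ:ℝ) - k))
          = ∏ κ ∈ Finset.Icc 1 k, ((k:ℝ) + 1 - κ) := by
        refine Finset.prod_congr rfl fun κ hκ => ?_
        simp only [Finset.mem_Icc] at hκ
        rw [if_pos hκ.2]
      have e2 : ∏ κ ∈ Finset.Icc (k+1) K, (if κ ≤ k then ((k:ℝ) + 1 - κ) else ((κ:ℝ) - k))
          = ∏ κ ∈ Finset.Icc (k+1) K, ((κ:ℝ) - k) := by
        refine Finset.prod_congr rfl fun κ hκ => ?_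
        simp only [Finset.mem_Icc] at hκ
        rw [if_neg (by omega)]
      rw [e1, e2, prod_descend, prod_ascend k K (by omega)]
      push_cast
      ring
    exact hb.trans (le_of_eq hsplit)
  -- positivity facts
  have hApos : 0 < A := by
    rw [hA_def]
    refine Finset.prod_pos fun κ hκ => ?_
    exact abs_pos.mpr (ne_of_gt (lt_of_lt_of_le (hfac_pos κ hκ) (hxpos κ hκ)))
  have hBpos : 0 < B := by
    rw [hB_def]
    refine Finset.prod_pos fun κ hκ => ?_
    simp only [Finset.mem_Icc] at hκ
    rw [hξ2']
    by_cases hcase : κ ≤ k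
    · have hκk : (κ:ℝ) ≤ k := by exact_mod_cast hcase
      have hm : (κ:ℝ) * h ≤ (k:ℝ) * h := mul_le_mul_of_nonneg_right hκk hh.le
      rw [abs_of_pos (by linarith)]; linarith
    · have hκk : (k:ℝ) + 1 ≤ (κ:ℝ) := by exact_mod_cast (by omega : k + 1 ≤ κ)
      have hm : ((k:ℝ) + 1) * h ≤ (κ:ℝ) * h := mul_le_mul_of_nonneg_right hκk hh.le
      rw [abs_of_neg (by linarith)]; linarith
  have hDpos : 0 < D := by
    rw [hD_def]
    have h1 : 0 < ∏ κ ∈ Finset.Icc 1 K, ((k:ℝ) + κ) := by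
      refine Finset.prod_pos fun κ hκ => ?_
      simp only [Finset.mem_Icc] at hκ
      have : (1:ℝ) ≤ (κ:ℝ) := by exact_mod_cast hκ.1
      have : (0:ℝ) ≤ (k:ℝ) := by positivity
      linarith
    have h2 : (0:ℝ) ≤ ((K:ℝ) + 1) ^ K * ((γ - β) / r) ^ K :=
      mul_nonneg (pow_nonneg (by positivity) _) (pow_nonneg (div_nonneg (by linarith) hr.le) _)
    linarith
  have hNpos : 0 < N := by
    rw [hN_def]
    exact_mod_cast Nat.mul_pos (Nat.factorial_pos _) (Nat.factorial_pos _)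
  have hBA : B / A ≤ N / D := by
    rw [div_le_div_iff₀ hApos hDpos]
    calc B * D ≤ (N * h ^ K) * D := mul_le_mul_of_nonneg_right hBup hDpos.le
      _ = N * (D * h ^ K) := by ring
      _ ≤ N * A := mul_le_mul_of_nonneg_left hAlow hNpos.le
  -- rpow manipulations
  have hP1 : ∏ κ ∈ Finset.Icc 1 K, |x - ξ1 κ| ^ (-μ) = A ^ (-μ) := by
    rw [hA_def]; exact Real.finset_prod_rpow _ _ (fun i _ => abs_nonneg _) _
  have hP2 : ∏ κ ∈ Finset.Icc 1 K, |x - ξ2 κ| ^ (-μ) = B ^ (-μ) := by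
    rw [hB_def]; exact Real.finset_prod_rpow _ _ (fun i _ => abs_nonneg _) _
  rw [hP1, hP2]
  have hAμ : (0:ℝ) < A ^ (-μ) := Real.rpow_pos_of_pos hApos _
  have hBμ : (0:ℝ) < B ^ (-μ) := Real.rpow_pos_of_pos hBpos _
  calc A ^ (-μ) / (A ^ (-μ) + B ^ (-μ))
      ≤ A ^ (-μ) / B ^ (-μ) :=
        div_le_div_of_nonneg_left hAμ.le hBμ (le_add_of_nonneg_left hAμ.le)
    _ = (B / A) ^ μ := by
        rw [Real.rpow_neg hApos.le, Real.rpow_neg hBpos.le,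
          Real.div_rpow hBpos.le hApos.le, inv_div_inv]
    _ ≤ (N / D) ^ μ :=
        Real.rpow_le_rpow (div_nonneg hBpos.le hApos.le) hBA hμ.le
end
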